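/- Let M be a full integral lattice on a positive definite quadratic space (V, q) over ℚ with an isometry σ of M of odd prime order p, let V₀ be the fixed space of σ (assumed nonzero), V₁ its orthogonal complement, and M_i = M ∩ V_i. Then either M = M₀ ⊕ M₁ (an orthogonal splitting), or the determinant of M₀ (the determinant of the Gram matrix (b(x_i,x_j)) of any ℤ-basis of M₀) is divisible by p. -/

import Mathlib

/-- Let `M` be a full integral lattice on a positive definite quadratic space `(V, q)` over `ℚ`
with an isometry `σ` of `M` of odd prime order `p`, let `V₀ ≠ 0` be the fixed space of `σ`,
`V₁` its orthogonal complement (w.r.t. the polar form `b` of `q`), and `Mᵢ = M ∩ Vᵢ`.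
Then either `M = M₀ ⊕ M₁` (an orthogonal splitting), or the determinant of `M₀` (the
determinant of the Gram matrix `(b (xᵢ) (xⱼ))` of any `ℤ`-basis of `M₀`) is divisible
by `p`. -/
theorem splitting_or_fixed_lattice_det_divisible
    (V : Type*) [AddCommGroup V] [Module ℚ V] [FiniteDimensional ℚ V]
    (q : QuadraticForm ℚ V) (hqpos : ∀ v : V, v ≠ 0 → 0 < q v)
    (p : ℕ) (hp : p.Prime) (hodd : Odd p)
    (σ : V ≃ₗ[ℚ] V) (hσq : ∀ v : V, q (σ v) = q v) (hσp : σ ^ p = 1)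
    (M : Submodule ℤ V) (hMfg : M.FG) (hMfull : Submodule.span ℚ (M : Set V) = ⊤)
    (hMint : ∀ x ∈ M, ∃ n : ℤ, q x = (n : ℚ))
    (hσM : ∀ x ∈ M, σ x ∈ M)
    (V₀ V₁ : Submodule ℚ V) (hV₀ne : V₀ ≠ ⊥)
    (hV₀ : ∀ v : V, v ∈ V₀ ↔ σ v = v)
    (hV₁ : ∀ v : V, v ∈ V₁ ↔ ∀ w ∈ V₀, QuadraticMap.polar q v w = 0)
    (M₀ M₁ : Submodule ℤ V)
    (hM₀ : M₀ = M ⊓ V₀.restrictScalars ℤ) (hM₁ : M₁ = M ⊓ V₁.restrictScalars ℤ)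
    (m₀ : ℕ) (b₀ : Module.Basis (Fin m₀) ℤ M₀) :
    M = M₀ ⊔ M₁ ∨
      ∃ k : ℤ, (Matrix.of fun i j =>
          QuadraticMap.polar q (b₀ i : V) (b₀ j : V)).det = (p : ℚ) * (k : ℚ) := by
  classical
  have hp1 : 0 < p := hp.pos
  -- σ preserves polar
  have hσpolar : ∀ x y : V, QuadraticMap.polar q (σ x) (σ y) = QuadraticMap.polar q x y := by
    intro x y
    simp [QuadraticMap.polar, ← map_add, hσq]
  have hσi_fix : ∀ (i : ℕ) (x w : V), σ w = w →
      QuadraticMap.polar q ((σ ^ i) x) w = QuadraticMap.polar q x w := by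
    intro i
    induction i with
    | zero => intro x w hw; simp
    | succ i ih =>
      intro x w hw
      have h1 : (σ ^ (i+1)) x = (σ ^ i) (σ x) := by
        rw [pow_succ]; rfl
      rw [h1, ih (σ x) w hw]
      conv_lhs => rw [← hw]
      rw [hσpolar]
  -- integrality of polar on M
  have hint : ∀ x ∈ M, ∀ y ∈ M, ∃ n : ℤ, QuadraticMap.polar q x y = (n : ℚ) := by
    intro x hx y hy
    obtain ⟨a, ha⟩ := hMint (x + y) (M.add_mem hx hy)
    obtain ⟨b, hb⟩ := hMint x hx
    obtain ⟨c, hc⟩ := hMint y hy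
    refine ⟨a - b - c, ?_⟩
    rw [QuadraticMap.polar, ha, hb, hc]; push_cast; ring
  have hpowM : ∀ (i : ℕ), ∀ x ∈ M, (σ ^ i) x ∈ M := by
    intro i
    induction i with
    | zero => intro x hx; simpa using hx
    | succ i ih =>
      intro x hx
      have h1 : (σ ^ (i+1)) x = (σ ^ i) (σ x) := by rw [pow_succ]; rfl
      rw [h1]; exact ih _ (hσM x hx)
  set T : V → V := fun x => ∑ i ∈ Finset.range p, (σ ^ i) x with hT
  have hTM : ∀ x ∈ M, T x ∈ M := fun x hx =>
    Submodule.sum_mem _ fun i _ => hpowM i x hx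
  have hTfix : ∀ x : V, σ (T x) = T x := by
    intro x
    have hfp : (σ ^ p) x = x := by rw [hσp]; rfl
    have h1 : σ (T x) = ∑ i ∈ Finset.range p, (σ ^ (i+1)) x := by
      rw [hT]
      simp only [map_sum]
      refine Finset.sum_congr rfl fun i _ => ?_
      rw [pow_succ']; rfl
    rw [h1]
    have h2 := Finset.sum_range_succ' (fun i => (σ ^ i) x) p
    have h3 := Finset.sum_range_succ (fun i => (σ ^ i) x) p
    rw [h3, hfp] at h2
    have h0 : (σ ^ 0) x = x := rfl
    rw [h0] at h2
    -- h2 : ∑ range p + x = ∑ f(i+1) + x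
    have := add_right_cancel h2.symm
    rw [hT]
    exact this.symm ▸ rfl
  have hTpolar : ∀ (x w : V), σ w = w →
      QuadraticMap.polar q (T x) w = p * QuadraticMap.polar q x w := by
    intro x w hw
    have h1 : QuadraticMap.polar q (T x) w
        = ∑ i ∈ Finset.range p, QuadraticMap.polar q ((σ ^ i) x) w := by
      simp_rw [← QuadraticMap.polarBilin_apply_apply]
      rw [hT, map_sum, LinearMap.sum_apply]
    rw [h1]
    rw [Finset.sum_congr rfl fun i _ => hσi_fix i x w hw]
    rw [Finset.sum_const, Finset.card_range, nsmul_eq_mul]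
  have hM₀M : M₀ ≤ M := by rw [hM₀]; exact inf_le_left
  have hM₀sub : ∀ v : V, v ∈ M₀ → v ∈ V₀ := by
    intro v hv
    rw [hM₀] at hv
    exact hv.2
  have hb₀V₀ : ∀ i, ((b₀ i : V)) ∈ V₀ := fun i => hM₀sub _ (b₀ i).2
  by_cases hcase : ∀ x ∈ M, (p:ℚ)⁻¹ • T x ∈ M₀
  · left
    apply le_antisymm
    · intro x hx
      have hy := hcase x hx
      have hyM : (p:ℚ)⁻¹ • T x ∈ M := hM₀M hy
      have hz : x - (p:ℚ)⁻¹ • T x ∈ M₁ := by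
        rw [hM₁]
        refine Submodule.mem_inf.mpr ⟨M.sub_mem hx hyM, ?_⟩
        rw [Submodule.restrictScalars_mem, hV₁]
        intro w hw
        have hw' : σ w = w := (hV₀ w).1 hw
        rw [QuadraticMap.polar_sub_left, QuadraticMap.polar_smul_left, hTpolar x w hw']
        have hpne : (p:ℚ) ≠ 0 := by exact_mod_cast hp1.ne'
        rw [smul_eq_mul, ← mul_assoc, inv_mul_cancel₀ hpne, one_mul, sub_self]
      have := Submodule.add_mem_sup hy hz
      simpa using this
    · rw [hM₀, hM₁]
      exact sup_le inf_le_left inf_le_left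
  · right
    push_neg at hcase
    obtain ⟨x, hxM, hyne⟩ := hcase
    have hzM₀ : T x ∈ M₀ := by
      rw [hM₀]
      exact ⟨hTM x hxM, (hV₀ _).2 (hTfix x)⟩
    set zz : M₀ := ⟨T x, hzM₀⟩ with hzz
    set n : Fin m₀ → ℤ := fun i => b₀.repr zz i with hn
    have hrepr : ∑ i, n i • (b₀ i) = zz := b₀.sum_repr zz
    have hreprV : T x = ∑ i, (n i : ℚ) • (b₀ i : V) := by
      have h := congrArg (M₀.subtype) hrepr
      rw [map_sum] at h
      simp only [map_zsmul, Submodule.coe_subtype] at h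
      change (zz : V) = _
      rw [← h]
      exact Finset.sum_congr rfl fun i _ => (Int.cast_smul_eq_zsmul ℚ (n i) _).symm
    -- not all coords divisible by p
    have hnotall : ¬ ∀ i, (p:ℤ) ∣ n i := by
      intro hall
      apply hyne
      choose c hc using hall
      have hyeq : (p:ℚ)⁻¹ • T x = ((∑ i, c i • b₀ i : M₀) : V) := by
        have h : ((∑ i, c i • b₀ i : M₀) : V) = ∑ i, (c i : ℚ) • (b₀ i : V) := by
          have h := map_sum M₀.subtype (fun i => c i • b₀ i) Finset.univ
          simp only [map_zsmul, Submodule.coe_subtype] at h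
          rw [h]
          exact Finset.sum_congr rfl fun i _ => (Int.cast_smul_eq_zsmul ℚ (c i) _).symm
        rw [h, hreprV, Finset.smul_sum]
        refine Finset.sum_congr rfl fun i _ => ?_
        rw [smul_smul]
        congr 1
        rw [hc i]
        push_cast
        have hpne : (p:ℚ) ≠ 0 := by exact_mod_cast hp1.ne'
        field_simp
      rw [hyeq]
      exact Submodule.coe_mem _
    -- integer Gram matrix
    choose g hg using fun i j => hint (b₀ i) (hM₀M (b₀ i).2) (b₀ j) (hM₀M (b₀ j).2)
    choose t ht using fun j => hint x hxM (b₀ j) (hM₀M (b₀ j).2)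
    have hkey : ∀ j, ∑ i, n i * g i j = (p:ℤ) * t j := by
      intro j
      have hwfix : σ (b₀ j : V) = (b₀ j : V) := (hV₀ _).1 (hb₀V₀ j)
      have h1 : QuadraticMap.polar q (T x) (b₀ j : V)
          = ∑ i, (n i : ℚ) * (g i j : ℚ) := by
        conv_lhs => rw [hreprV]
        simp_rw [← QuadraticMap.polarBilin_apply_apply]
        rw [map_sum, LinearMap.sum_apply]
        refine Finset.sum_congr rfl fun i _ => ?_
        rw [map_smul, LinearMap.smul_apply, smul_eq_mul,
          QuadraticMap.polarBilin_apply_apply, hg]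
      have h2 : QuadraticMap.polar q (T x) (b₀ j : V) = (p : ℚ) * (t j : ℚ) := by
        rw [hTpolar x _ hwfix, ht]
      rw [h1] at h2
      exact_mod_cast h2
    haveI : Fact p.Prime := ⟨hp⟩
    set A : Matrix (Fin m₀) (Fin m₀) ℤ := Matrix.of g with hA
    have hAdet : (p:ℤ) ∣ A.det := by
      have h0 : (A.map (Int.cast : ℤ → ZMod p)).det = 0 := by
        rw [← Matrix.exists_vecMul_eq_zero_iff]
        refine ⟨fun i => ((n i : ZMod p)), ?_, ?_⟩
        · intro h0'
          apply hnotall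
          intro i
          have := congrFun h0' i
          simpa [ZMod.intCast_zmod_eq_zero_iff_dvd] using this
        · funext j
          have hk := hkey j
          have : ((∑ i, n i * g i j : ℤ) : ZMod p) = (((p:ℤ) * t j : ℤ) : ZMod p) := by
            exact_mod_cast congrArg _ hk
          push_cast at this
          simp only [ZMod.natCast_self, zero_mul] at this
          simpa [Matrix.vecMul, dotProduct, hA] using this
      have h1 : ((A.det : ℤ) : ZMod p) = 0 := by
        have h2 := RingHom.map_det (Int.castRingHom (ZMod p)) A
        rw [RingHom.mapMatrix_apply] at h2
        simp only [Int.coe_castRingHom] at h2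
        rw [h2]
        exact h0
      exact (ZMod.intCast_zmod_eq_zero_iff_dvd _ p).mp h1
    obtain ⟨k, hk⟩ := hAdet
    refine ⟨k, ?_⟩
    have hEq : (Matrix.of fun i j => QuadraticMap.polar q (b₀ i : V) (b₀ j : V))
        = A.map (Int.cast : ℤ → ℚ) := by
      ext i j
      simp [hA, hg]
    have h2 := RingHom.map_det (Int.castRingHom ℚ) A
    rw [RingHom.mapMatrix_apply] at h2
    simp only [Int.coe_castRingHom] at h2
    rw [hEq, ← h2, hk]
    push_cast
    ring
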